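/- Let A, B ∈ ℍ² with D = d(A,B) > 0, let u ∈ T_A ℍ² and v ∈ T_B ℍ², set A_t = exp_A(t u), B_t = exp_B(t v), and E(t) = (1/2) d(A_t, B_t)². Let α, β be the oriented angles between the geodesic AB and u, v respectively. Then E''(0) = a + b·D·tanh(D/2) + c·(D·coth(D) − D·tanh(D/2)), where a = (‖u‖ cos α − ‖v‖ cos β)², b = ‖u‖² sin² α + ‖v‖² sin² β, and c = (‖u‖ sin α − ‖v‖ sin β)². -/

import Mathlib

open Filter Topology


noncomputable section

/-- The Minkowski bilinear form on `ℝ^{n,1}`. -/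
def mink (n : ℕ) (x y : Fin (n+1) → ℝ) : ℝ :=
  (∑ i : Fin n, x i.castSucc * y i.castSucc) - x (Fin.last n) * y (Fin.last n)

/-- Membership in the hyperboloid model of hyperbolic `n`-space. -/
def IsHyp (n : ℕ) (x : Fin (n+1) → ℝ) : Prop :=
  mink n x x = -1 ∧ 0 < x (Fin.last n)

/-- Tangency to the hyperboloid at `x`. -/
def IsTang (n : ℕ) (x v : Fin (n+1) → ℝ) : Prop := mink n x v = 0

/-- Inverse hyperbolic cosine. -/
def acosh (x : ℝ) : ℝ := Real.log (x + Real.sqrt (x ^ 2 - 1))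

/-- Hyperbolic distance in the hyperboloid model: `cosh (dist x y) = -⟨x,y⟩`. -/
def hdist (n : ℕ) (x y : Fin (n+1) → ℝ) : ℝ := acosh (-(mink n x y))

/-- Norm of a tangent vector (the Minkowski form is positive definite on tangent spaces). -/
def tnorm (n : ℕ) (v : Fin (n+1) → ℝ) : ℝ := Real.sqrt (mink n v v)

/-- The Riemannian exponential map of the hyperboloid. -/
def hexp (n : ℕ) (x v : Fin (n+1) → ℝ) : Fin (n+1) → ℝ :=
  Real.cosh (tnorm n v) • x + (Real.sinh (tnorm n v) / tnorm n v) • v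

/-- Unit tangent vector at `x` pointing towards `y`. -/
def hdir (n : ℕ) (x y : Fin (n+1) → ℝ) : Fin (n+1) → ℝ :=
  (Real.sinh (hdist n x y))⁻¹ • (y + (mink n x y) • x)

/-- The inverse exponential map `exp_x⁻¹ (y)`. -/
def hlog (n : ℕ) (x y : Fin (n+1) → ℝ) : Fin (n+1) → ℝ :=
  hdist n x y • hdir n x y

/-- Parallel transport from `T_y ℍⁿ` to `T_x ℍⁿ` along the geodesic from `y` to `x`. -/
def ptrans (n : ℕ) (x y v : Fin (n+1) → ℝ) : Fin (n+1) → ℝ :=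
  v + ((mink n x v) / (1 - mink n x y)) • (x + y)

/-- Minkowski volume form on `ℝ^{2,1}`; `det3 x u w = ‖u‖‖w‖ sin θ` for tangent
vectors `u, w` at `x ∈ ℍ²`, where `θ` is the oriented angle from `u` to `w`. -/
def det3 (a b c : Fin 3 → ℝ) : ℝ :=
  a 0 * (b 1 * c 2 - b 2 * c 1) - a 1 * (b 0 * c 2 - b 2 * c 0)
    + a 2 * (b 0 * c 1 - b 1 * c 0)

/-- `sinhc x = sinh x / x`, with `sinhc 0 = 1`. -/
def sinhc (x : ℝ) : ℝ := if x = 0 then 1 else Real.sinh x / x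

lemma cosh_acosh {x : ℝ} (hx : 1 ≤ x) : Real.cosh (acosh x) = x := by
  have h1 : (0:ℝ) ≤ x^2 - 1 := by nlinarith
  have hs : Real.sqrt (x^2-1) ^ 2 = x^2 - 1 := Real.sq_sqrt h1
  have hsn : 0 ≤ Real.sqrt (x^2-1) := Real.sqrt_nonneg _
  have hpos : 0 < x + Real.sqrt (x^2-1) := by nlinarith
  rw [acosh, Real.cosh_eq, Real.exp_neg, Real.exp_log hpos]
  rw [div_eq_iff (by norm_num : (2:ℝ) ≠ 0)]
  field_simp
  nlinarith [hs]

lemma sinh_acosh {x : ℝ} (hx : 1 ≤ x) : Real.sinh (acosh x) = Real.sqrt (x^2-1) := by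
  have h1 : (0:ℝ) ≤ x^2 - 1 := by nlinarith
  have hs : Real.sqrt (x^2-1) ^ 2 = x^2 - 1 := Real.sq_sqrt h1
  have hsn : 0 ≤ Real.sqrt (x^2-1) := Real.sqrt_nonneg _
  have hpos : 0 < x + Real.sqrt (x^2-1) := by nlinarith
  rw [acosh, Real.sinh_eq, Real.exp_neg, Real.exp_log hpos]
  rw [div_eq_iff (by norm_num : (2:ℝ) ≠ 0)]
  field_simp
  nlinarith [hs]

lemma hasDerivAt_acosh {x : ℝ} (hx : 1 < x) :
    HasDerivAt acosh (Real.sqrt (x^2-1))⁻¹ x := by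
  have h1 : (0:ℝ) < x^2 - 1 := by nlinarith
  have hs : Real.sqrt (x^2-1) ^ 2 = x^2 - 1 := Real.sq_sqrt h1.le
  have hsp : 0 < Real.sqrt (x^2-1) := Real.sqrt_pos.2 h1
  have hpos : 0 < x + Real.sqrt (x^2-1) := by nlinarith
  have hinner : HasDerivAt (fun y : ℝ => y^2 - 1) (2*x) x := by
    simpa using ((hasDerivAt_pow 2 x).sub_const 1)
  have hsq : HasDerivAt (fun y : ℝ => Real.sqrt (y^2-1)) (1/(2*Real.sqrt (x^2-1)) * (2*x)) x :=
    (Real.hasDerivAt_sqrt h1.ne').comp x hinner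
  have hsum : HasDerivAt (fun y : ℝ => y + Real.sqrt (y^2-1))
      (1 + 1/(2*Real.sqrt (x^2-1)) * (2*x)) x := (hasDerivAt_id x).add hsq
  have hlog : HasDerivAt (fun y : ℝ => Real.log (y + Real.sqrt (y^2-1)))
      ((x + Real.sqrt (x^2-1))⁻¹ * (1 + 1/(2*Real.sqrt (x^2-1)) * (2*x))) x :=
    ((Real.hasDerivAt_log hpos.ne').comp x hsum :)
  have heq : (x + Real.sqrt (x^2-1))⁻¹ * (1 + 1/(2*Real.sqrt (x^2-1)) * (2*x))
      = (Real.sqrt (x^2-1))⁻¹ := by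
    field_simp
    nlinarith [hs]
  rw [heq] at hlog
  exact hlog


lemma mink2 (x y : Fin 3 → ℝ) : mink 2 x y = x 0 * y 0 + x 1 * y 1 - x 2 * y 2 := by
  simp [mink, Fin.sum_univ_two]

lemma lastval (x : Fin 3 → ℝ) : x (Fin.last 2) = x 2 := rfl

-- positive definiteness on tangent space
lemma tang_nonneg {A u : Fin 3 → ℝ} (hA : IsHyp 2 A) (hu : IsTang 2 A u) :
    0 ≤ mink 2 u u := by
  obtain ⟨hA1, hA2⟩ := hA
  rw [lastval A] at hA2
  rw [mink2] at hA1 ⊢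
  rw [IsTang, mink2] at hu
  have h2 : (A 2 * u 2)^2 = (A 0 * u 0 + A 1 * u 1)^2 := by
    rw [show A 2 * u 2 = A 0 * u 0 + A 1 * u 1 from by linarith]
  have key : A 2^2 * (u 0^2 + u 1^2 - u 2^2) ≥ u 0^2 + u 1^2 := by
    nlinarith [h2, sq_nonneg (A 0 * u 1 - A 1 * u 0)]
  nlinarith [key, mul_pos hA2 hA2, sq_nonneg (u 0), sq_nonneg (u 1)]

lemma tang_zero {A u : Fin 3 → ℝ} (hA : IsHyp 2 A) (hu : IsTang 2 A u)
    (h : mink 2 u u = 0) : u = 0 := by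
  obtain ⟨hA1, hA2⟩ := hA
  rw [lastval A] at hA2
  rw [mink2] at hA1
  rw [IsTang, mink2] at hu
  rw [mink2] at h
  have h2 : (A 2 * u 2)^2 = (A 0 * u 0 + A 1 * u 1)^2 := by
    rw [show A 2 * u 2 = A 0 * u 0 + A 1 * u 1 from by linarith]
  have key : A 2^2 * (u 0^2 + u 1^2 - u 2^2) ≥ u 0^2 + u 1^2 := by
    nlinarith [h2, sq_nonneg (A 0 * u 1 - A 1 * u 0)]
  have h01 : u 0 ^ 2 + u 1 ^ 2 = 0 := by
    nlinarith [key, sq_nonneg (u 0), sq_nonneg (u 1)]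
  have h0 : u 0 = 0 := by nlinarith [sq_nonneg (u 0), sq_nonneg (u 1)]
  have h1 : u 1 = 0 := by nlinarith [sq_nonneg (u 0), sq_nonneg (u 1)]
  have h2 : u 2 = 0 := by
    have := hu
    rw [h0, h1] at this
    have : A 2 * u 2 = 0 := by linarith
    rcases mul_eq_zero.1 this with h | h
    · linarith
    · exact h
  funext i
  fin_cases i <;> simp [h0, h1, h2]

lemma mink_AB_lt {A B : Fin 3 → ℝ} (hA : IsHyp 2 A) (hB : IsHyp 2 B) (hAB : A ≠ B) :
    1 < -(mink 2 A B) := by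
  have hge : 1 ≤ -(mink 2 A B) := by
    obtain ⟨hA1, hA2⟩ := hA
    obtain ⟨hB1, hB2⟩ := hB
    rw [lastval A] at hA2; rw [lastval B] at hB2
    rw [mink2] at hA1 hB1 ⊢
    have hm : A 2^2 * B 2^2 = (1 + A 0^2 + A 1^2) * (1 + B 0^2 + B 1^2) := by
      nlinarith [hA1, hB1]
    have key : (A 2 * B 2)^2 ≥ (1 + A 0 * B 0 + A 1 * B 1)^2 := by
      nlinarith [hm, sq_nonneg (A 0 - B 0), sq_nonneg (A 1 - B 1), sq_nonneg (A 0 * B 1 - A 1 * B 0)]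
    nlinarith [key, mul_pos hA2 hB2]
  rcases lt_or_eq_of_le hge with h | h
  · exact h
  · exfalso
    apply hAB
    obtain ⟨hA1, hA2⟩ := hA
    obtain ⟨hB1, hB2⟩ := hB
    have hw : IsTang 2 A (A - B) := by
      rw [IsTang, mink2]
      rw [mink2] at hA1 h
      simp only [Pi.sub_apply]
      ring_nf
      ring_nf at h hA1
      linarith
    have hww : mink 2 (A - B) (A - B) = 0 := by
      rw [mink2]
      rw [mink2] at hA1 hB1 h
      simp only [Pi.sub_apply]
      ring_nf
      ring_nf at h hA1 hB1
      linarith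
    have := tang_zero ⟨hA1, hA2⟩ hw hww
    have : A - B = 0 := this
    funext i
    have := congrFun this i
    simp at this
    linarith [this]

def S (c : ℝ) : ℝ → ℝ := fun t => if c = 0 then t else Real.sinh (c*t) / c

lemma tnorm_zero : tnorm 2 (0 : Fin 3 → ℝ) = 0 := by
  rw [tnorm]; simp [mink2]

lemma hexp_eq {A u : Fin 3 → ℝ} (hA : IsHyp 2 A) (hu : IsTang 2 A u) (t : ℝ) :
    hexp 2 A (t • u) = Real.cosh (tnorm 2 u * t) • A + (S (tnorm 2 u) t) • u := by
  have hmuu : 0 ≤ mink 2 u u := tang_nonneg hA hu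
  have hmt : mink 2 (t • u) (t • u) = t^2 * mink 2 u u := by
    rw [mink2, mink2]; simp [Pi.smul_apply, smul_eq_mul]; ring
  have htn : tnorm 2 (t • u) = |t| * tnorm 2 u := by
    rw [tnorm, tnorm, hmt, show t^2 = |t|^2 from (sq_abs t).symm]
    rw [Real.sqrt_mul (sq_nonneg _), Real.sqrt_sq (abs_nonneg t)]
  have ha0 : 0 ≤ tnorm 2 u := Real.sqrt_nonneg _
  rcases eq_or_ne (tnorm 2 u) 0 with haz | haz
  · have hmuu0 : mink 2 u u = 0 := by
      rcases (Real.sqrt_eq_zero hmuu).1 haz with h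
      exact h
    have hu0 : u = 0 := tang_zero hA hu hmuu0
    subst hu0
    rw [haz]
    funext i
    simp [hexp, tnorm_zero, smul_zero]
  · have hap : 0 < tnorm 2 u := lt_of_le_of_ne ha0 (Ne.symm haz)
    set a := tnorm 2 u with ha
    rcases eq_or_ne t 0 with htz | htz
    · subst htz
      funext i
      simp [hexp, S, haz, tnorm_zero]
    · have h1 : hexp 2 A (t • u)
          = Real.cosh (|t| * a) • A + (Real.sinh (|t| * a) / (|t| * a)) • (t • u) := by
        rw [hexp, htn]
      rw [h1]
      have hc : Real.cosh (|t| * a) = Real.cosh (a * t) := by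
        rcases abs_cases t with ⟨h, _⟩ | ⟨h, _⟩
        · rw [h, mul_comm]
        · rw [h, show -t * a = -(a*t) by ring, Real.cosh_neg]
      have hs : (Real.sinh (|t| * a) / (|t| * a)) • (t • u) = (S a t) • u := by
        rw [smul_smul]
        congr 1
        rw [S, if_neg haz]
        rcases abs_cases t with ⟨h, _⟩ | ⟨h, _⟩
        · rw [h]
          rw [mul_comm t a]
          field_simp
        · rw [h, show -t * a = -(a*t) by ring, Real.sinh_neg]
          field_simp
      rw [hc, hs]

lemma mink_bilin (x y z w : ℝ) (P Q R T : Fin 3 → ℝ) :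
    mink 2 (x • P + y • Q) (z • R + w • T)
      = x*z * mink 2 P R + x*w * mink 2 P T + y*z * mink 2 Q R + y*w * mink 2 Q T := by
  simp [mink2, Pi.add_apply, Pi.smul_apply, smul_eq_mul]; ring

lemma mink_comm (x y : Fin 3 → ℝ) : mink 2 x y = mink 2 y x := by
  simp [mink2]; ring

lemma det3_swap (x y z : Fin 3 → ℝ) : det3 x y z = -det3 y x z := by
  simp [det3]; ring

lemma det3_mul_det3 (x y z w : Fin 3 → ℝ) :
    det3 x y z * det3 x y w =
      -(mink 2 x x * (mink 2 y y * mink 2 z w - mink 2 y w * mink 2 z y)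
        - mink 2 x y * (mink 2 y x * mink 2 z w - mink 2 y w * mink 2 z x)
        + mink 2 x w * (mink 2 y x * mink 2 z y - mink 2 y y * mink 2 z x)) := by
  simp only [mink2, det3]; ring

lemma S_zero (c : ℝ) : S c 0 = 0 := by unfold S; split <;> simp

lemma hasDerivAt_ch (a t : ℝ) : HasDerivAt (fun t => Real.cosh (a*t)) (a * Real.sinh (a*t)) t := by
  have h : HasDerivAt (fun t : ℝ => a*t) a t := by
    simpa using (hasDerivAt_id t).const_mul a
  simpa [mul_comm, Function.comp_def] using (Real.hasDerivAt_cosh (a*t)).comp t h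

lemma hasDerivAt_sh (a t : ℝ) : HasDerivAt (fun t => Real.sinh (a*t)) (a * Real.cosh (a*t)) t := by
  have h : HasDerivAt (fun t : ℝ => a*t) a t := by
    simpa using (hasDerivAt_id t).const_mul a
  simpa [mul_comm, Function.comp_def] using (Real.hasDerivAt_sinh (a*t)).comp t h

lemma hasDerivAt_S (c t : ℝ) : HasDerivAt (S c) (Real.cosh (c*t)) t := by
  rcases eq_or_ne c 0 with h | h
  · subst h
    have hS : S 0 = fun t => t := by funext s; simp [S]
    rw [hS]
    simpa using (hasDerivAt_id' t)
  · have := (hasDerivAt_sh c t).div_const c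
    have h2 : c * Real.cosh (c*t) / c = Real.cosh (c*t) := by field_simp
    rw [h2] at this
    have hfun : S c = fun x => Real.sinh (c * x) / c := by
      funext s
      simp [S, h]
    rw [hfun]; exact this

lemma mink_left (c p : ℝ) (X Y u : Fin 3 → ℝ) :
    mink 2 (c • (X + p • Y)) u = c * (mink 2 X u + p * mink 2 Y u) := by
  simp [mink2]; ring

lemma det3_mid (c p : ℝ) (A X Y u : Fin 3 → ℝ) :
    det3 A (c • (X + p • Y)) u = c * (det3 A X u + p * det3 A Y u) := by
  simp [det3]; ring

lemma det3_aa (A u : Fin 3 → ℝ) : det3 A A u = 0 := by simp [det3]; ring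


set_option maxHeartbeats 2000000 in
/-- (second derivative of `E(t) = ½ d(A_t,B_t)²`), with
`a = (‖u‖cos α - ‖v‖cos β)²`, `b = ‖u‖² sin²α + ‖v‖² sin²β`,
`c = (‖u‖sin α - ‖v‖sin β)²` and `D = d(A,B) > 0`. -/
theorem stmt3 (A B u v : Fin 3 → ℝ)
    (hA : IsHyp 2 A) (hB : IsHyp 2 B) (hAB : A ≠ B) (hD : 0 < hdist 2 A B)
    (hu : IsTang 2 A u) (hv : IsTang 2 B v)
    (α β : ℝ)
    (hαc : tnorm 2 u * Real.cos α = mink 2 (hdir 2 A B) u)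
    (hαs : tnorm 2 u * Real.sin α = det3 A (hdir 2 A B) u)
    (hβc : tnorm 2 v * Real.cos β = -(mink 2 (hdir 2 B A) v))
    (hβs : tnorm 2 v * Real.sin β = -(det3 B (hdir 2 B A) v)) :
    deriv (deriv (fun t : ℝ =>
        (1/2) * (hdist 2 (hexp 2 A (t • u)) (hexp 2 B (t • v))) ^ 2)) 0
      = (tnorm 2 u * Real.cos α - tnorm 2 v * Real.cos β) ^ 2
        + ((tnorm 2 u) ^ 2 * (Real.sin α) ^ 2 + (tnorm 2 v) ^ 2 * (Real.sin β) ^ 2)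
            * (hdist 2 A B * Real.tanh (hdist 2 A B / 2))
        + (tnorm 2 u * Real.sin α - tnorm 2 v * Real.sin β) ^ 2
            * (hdist 2 A B * (Real.cosh (hdist 2 A B) / Real.sinh (hdist 2 A B))
                - hdist 2 A B * Real.tanh (hdist 2 A B / 2)) := by
  have hm : 1 < -(mink 2 A B) := mink_AB_lt hA hB hAB
  set m : ℝ := -(mink 2 A B) with hmdef
  set s : ℝ := Real.sqrt (m^2 - 1) with hsdef
  have hs2 : s^2 = m^2 - 1 := Real.sq_sqrt (by nlinarith)
  have hs0 : 0 < s := Real.sqrt_pos.2 (by nlinarith)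
  have hDm : hdist 2 A B = acosh m := rfl
  have hcD : Real.cosh (hdist 2 A B) = m := by rw [hDm]; exact cosh_acosh hm.le
  have hsD : Real.sinh (hdist 2 A B) = s := by rw [hDm, hsdef]; exact sinh_acosh hm.le
  have hBAdist : hdist 2 B A = hdist 2 A B := by rw [hdist, hdist, mink_comm]
  have hpAB : mink 2 A B = -m := by rw [hmdef, neg_neg]
  have hpBA : mink 2 B A = -m := by rw [mink_comm]; exact hpAB
  have hAu : mink 2 A u = 0 := hu
  have hBv : mink 2 B v = 0 := hv
  have huA : mink 2 u A = 0 := by rw [mink_comm]; exact hAu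
  have hvB : mink 2 v B = 0 := by rw [mink_comm]; exact hBv
  set a : ℝ := tnorm 2 u with hadef
  set b : ℝ := tnorm 2 v with hbdef
  set ca := Real.cos α; set sa := Real.sin α
  set cb := Real.cos β; set sb := Real.sin β
  -- translate the angle hypotheses
  have hBu : mink 2 B u = s * (a * ca) := by
    rw [hdir, hsD, mink_left, hAu, hpAB] at hαc
    field_simp at hαc
    linarith [hαc]
  have hdABu : det3 A B u = s * (a * sa) := by
    rw [hdir, hsD, det3_mid, det3_aa, hpAB] at hαs
    field_simp at hαs
    linarith [hαs]
  have hAv : mink 2 A v = -(s * (b * cb)) := by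
    rw [hdir, hBAdist, hsD, mink_left, hBv, hpBA] at hβc
    field_simp at hβc
    linarith [hβc]
  have hdBAv : det3 B A v = -(s * (b * sb)) := by
    rw [hdir, hBAdist, hsD, det3_mid, det3_aa, hpBA] at hβs
    field_simp at hβs
    linarith [hβs]
  have hdABv : det3 A B v = s * (b * sb) := by
    rw [det3_swap]
    rw [hdBAv]
    ring
  have huB : mink 2 u B = s * (a * ca) := by rw [mink_comm]; exact hBu
  have hvA : mink 2 v A = -(s * (b * cb)) := by rw [mink_comm]; exact hAv
  -- compute mink u v via the Gram identity
  have huv : mink 2 u v = a * b * (m * ca * cb + sa * sb) := by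
    have hGram := det3_mul_det3 A B u v
    rw [hdABu, hdABv, hA.1, hB.1, hpAB, hpBA, hBv, huA, huB, hAv] at hGram
    have hkey : s^2 * (mink 2 u v) = s^2 * (a * b * (m * ca * cb + sa * sb)) := by
      linear_combination (mink 2 u v) * hs2 - hGram
    exact mul_left_cancel₀ (by positivity) hkey
  set K3 : ℝ := a * b * (m * ca * cb + sa * sb) with hK3def
  set F : ℝ → ℝ := fun t => m * (Real.cosh (a*t) * Real.cosh (b*t))
      + (s*(b*cb)) * (Real.cosh (a*t) * S b t)
      - (s*(a*ca)) * (S a t * Real.cosh (b*t))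
      - K3 * (S a t * S b t) with hF
  have hE : (fun t : ℝ => (1/2) * (hdist 2 (hexp 2 A (t • u)) (hexp 2 B (t • v)))^2)
      = fun t => (1/2) * (acosh (F t))^2 := by
    funext t
    rw [hexp_eq hA hu t, hexp_eq hB hv t, ← hadef, ← hbdef]
    have hval : -(mink 2 (Real.cosh (a * t) • A + S a t • u) (Real.cosh (b * t) • B + S b t • v)) = F t := by
      rw [mink_bilin, hpAB, hAv, huB, huv, hF]
      ring
    rw [hdist, hval]
  set FD : ℝ → ℝ := fun t =>
      m * (a * Real.sinh (a*t) * Real.cosh (b*t) + Real.cosh (a*t) * (b * Real.sinh (b*t)))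
      + (s*(b*cb)) * (a * Real.sinh (a*t) * S b t + Real.cosh (a*t) * Real.cosh (b*t))
      - (s*(a*ca)) * (Real.cosh (a*t) * Real.cosh (b*t) + S a t * (b * Real.sinh (b*t)))
      - K3 * (Real.cosh (a*t) * S b t + S a t * Real.cosh (b*t)) with hFD
  have hFd : ∀ t, HasDerivAt F (FD t) t := by
    intro t
    have h1 := (hasDerivAt_ch a t).mul (hasDerivAt_ch b t)
    have h2 := (hasDerivAt_ch a t).mul (hasDerivAt_S b t)
    have h3 := (hasDerivAt_S a t).mul (hasDerivAt_ch b t)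
    have h4 := (hasDerivAt_S a t).mul (hasDerivAt_S b t)
    have h5 := (((h1.const_mul m).add (h2.const_mul (s*(b*cb)))).sub
        (h3.const_mul (s*(a*ca)))).sub (h4.const_mul K3)
    exact h5
  have hF0 : F 0 = m := by
    rw [hF]; simp [S_zero]
  have hFD0 : FD 0 = s*(b*cb) - s*(a*ca) := by
    rw [hFD]; simp [S_zero]
  have hFDd : HasDerivAt FD (m * (a^2 + b^2) - 2*K3) 0 := by
    have t1 := ((hasDerivAt_sh a 0).const_mul a).mul (hasDerivAt_ch b 0)
    have t2 := (hasDerivAt_ch a 0).mul ((hasDerivAt_sh b 0).const_mul b)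
    have t3 := ((hasDerivAt_sh a 0).const_mul a).mul (hasDerivAt_S b 0)
    have t4 := (hasDerivAt_ch a 0).mul (hasDerivAt_ch b 0)
    have t5 := (hasDerivAt_S a 0).mul ((hasDerivAt_sh b 0).const_mul b)
    have t6 := (hasDerivAt_ch a 0).mul (hasDerivAt_S b 0)
    have t7 := (hasDerivAt_S a 0).mul (hasDerivAt_ch b 0)
    have h5 := ((((t1.add t2).const_mul m).add ((t3.add t4).const_mul (s*(b*cb)))).sub
        ((t4.add t5).const_mul (s*(a*ca)))).sub ((t6.add t7).const_mul K3)
    refine h5.congr_deriv ?_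
    simp [S_zero]
    ring
  have hconF : ContinuousAt F 0 := (hFd 0).continuousAt
  have hev : ∀ᶠ t in 𝓝 (0:ℝ), 1 < F t := by
    have hmem : Set.Ioi (1:ℝ) ∈ 𝓝 (F 0) := Ioi_mem_nhds (by rw [hF0]; exact hm)
    exact Filter.eventually_of_mem (hconF.preimage_mem_nhds hmem) (fun t ht => ht)
  have hEderiv : ∀ t : ℝ, 1 < F t → HasDerivAt (fun t => (1/2) * (acosh (F t))^2)
      (acosh (F t) * ((Real.sqrt ((F t)^2 - 1))⁻¹ * FD t)) t := by
    intro t ht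
    have h1 : HasDerivAt (fun t => acosh (F t)) ((Real.sqrt ((F t)^2-1))⁻¹ * FD t) t :=
      (hasDerivAt_acosh ht).comp t (hFd t)
    have h2 := (h1.pow 2).const_mul (1/2 : ℝ)
    refine h2.congr_deriv ?_
    ring
  rw [hE]
  have hev2 : deriv (fun t => (1/2) * (acosh (F t))^2)
      =ᶠ[𝓝 (0:ℝ)] fun t => acosh (F t) * ((Real.sqrt ((F t)^2-1))⁻¹ * FD t) := by
    filter_upwards [hev] with t ht
    exact (hEderiv t ht).deriv
  rw [hev2.deriv_eq]
  have hF01 : (1:ℝ) < F 0 := by rw [hF0]; exact hm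
  have hb1 : HasDerivAt (fun t => acosh (F t)) ((Real.sqrt ((F 0)^2-1))⁻¹ * FD 0) 0 :=
    (hasDerivAt_acosh hF01).comp 0 (hFd 0)
  have hgne : ((F 0)^2 - 1) ≠ 0 := by rw [hF0]; nlinarith
  have hsqF : Real.sqrt ((F 0)^2 - 1) = s := by rw [hF0]
  have hg : HasDerivAt (fun t => (F t)^2 - 1) (2 * F 0 * FD 0) 0 := by
    have h := ((hFd 0).pow 2).sub_const 1
    refine h.congr_deriv ?_
    ring
  have hsq : HasDerivAt (fun t => Real.sqrt ((F t)^2 - 1)) (1/(2*Real.sqrt ((F 0)^2-1)) * (2 * F 0 * FD 0)) 0 :=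
    (Real.hasDerivAt_sqrt hgne).comp 0 hg
  have hsne : Real.sqrt ((F 0)^2-1) ≠ 0 := by rw [hsqF]; exact hs0.ne'
  have hb2 := hsq.inv hsne
  have htot := hb1.mul (hb2.mul hFDd)
  have htot' : HasDerivAt (fun t => acosh (F t) * ((Real.sqrt ((F t)^2-1))⁻¹ * FD t)) _ 0 := htot
  rw [htot'.deriv]
  simp only [Pi.mul_apply, Pi.inv_apply]
  rw [hsqF, hF0, hFD0]
  have hacoshm : acosh m = hdist 2 A B := hDm.symm
  rw [hacoshm]
  have hx2 : hdist 2 A B = 2 * (hdist 2 A B / 2) := by ring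
  have hshx : 0 < Real.sinh (hdist 2 A B / 2) := Real.sinh_pos_iff.2 (by linarith)
  have hchx : (0:ℝ) < Real.cosh (hdist 2 A B / 2) := Real.cosh_pos _
  have htanh : Real.tanh (hdist 2 A B / 2) = (m-1)/s := by
    have h2 : Real.sinh (hdist 2 A B) = 2 * Real.sinh (hdist 2 A B / 2) * Real.cosh (hdist 2 A B / 2) := by
      rw [← Real.sinh_two_mul]; congr 1 <;> ring
    have h3 : Real.cosh (hdist 2 A B) = Real.cosh (hdist 2 A B / 2)^2 + Real.sinh (hdist 2 A B / 2)^2 := by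
      rw [← Real.cosh_two_mul]; congr 1 <;> ring
    have hcsq : Real.cosh (hdist 2 A B / 2)^2 = Real.sinh (hdist 2 A B / 2)^2 + 1 :=
      Real.cosh_sq (hdist 2 A B / 2)
    rw [Real.tanh_eq_sinh_div_cosh, ← hcD, ← hsD, h2, h3]
    rw [div_eq_div_iff hchx.ne' (mul_pos (mul_pos two_pos hshx) hchx).ne']
    linear_combination (-Real.cosh (hdist 2 A B / 2)) * hcsq
  rw [htanh, hcD, hsD]
  have hpa : sa^2 = 1 - ca^2 := by
    have := Real.sin_sq_add_cos_sq α
    linarith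
  have hpb : sb^2 = 1 - cb^2 := by
    have := Real.sin_sq_add_cos_sq β
    linarith
  rw [hK3def]
  field_simp
  ring_nf
  linear_combination (hdist 2 A B*mink 2 A B*a^2) * hpa + (hdist 2 A B*mink 2 A B*b^2) * hpb
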